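/- Let F be a field, λ ∈ F with λ ≠ 0, and let A ∈ F^{n×n} have rank r. Then (n−r)² ≤ dim C_F(A,λ) ≤ (n−r)² + r². -/
import Mathlib

open Matrix Module

set_option maxHeartbeats 2000000
set_option synthInstance.maxHeartbeats 400000

/-- The twisted centralizer code `C_F(A,λ) = {B | A*B - λ*B*A = 0}`. -/
noncomputable def twistedCentralizer {F : Type*} [Field F] {m : Type*} [Fintype m] [DecidableEq m]
    (A : Matrix m m F) (lam : F) : Submodule F (Matrix m m F) :=
  LinearMap.ker (LinearMap.mulLeft F A - lam • LinearMap.mulRight F A)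

section Aux

variable {F : Type*} [Field F] {n : ℕ}

lemma mem_twistedCentralizer_iff {A B : Matrix (Fin n) (Fin n) F} {lam : F} :
    B ∈ twistedCentralizer A lam ↔ A * B = lam • (B * A) := by
  simp [twistedCentralizer, LinearMap.mem_ker, sub_eq_zero, LinearMap.mulLeft_apply,
    LinearMap.mulRight_apply]

lemma mulVecLin_injOn {M N : Matrix (Fin n) (Fin n) F} (h : M.mulVecLin = N.mulVecLin) :
    M = N :=
  Matrix.toLin'.injective h

/-- The space of matrices killed by `A` on both sides. -/
noncomputable def bikernel (A : Matrix (Fin n) (Fin n) F) :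
    Submodule F (Matrix (Fin n) (Fin n) F) :=
  LinearMap.ker (LinearMap.mulLeft F A) ⊓ LinearMap.ker (LinearMap.mulRight F A)

lemma mem_bikernel_iff {A B : Matrix (Fin n) (Fin n) F} :
    B ∈ bikernel A ↔ A * B = 0 ∧ B * A = 0 := by
  simp [bikernel, LinearMap.mem_ker, LinearMap.mulLeft_apply, LinearMap.mulRight_apply]

/-- The natural map `Hom(Fⁿ/im A, ker A) → Mₙ(F)`. -/
noncomputable def bikMap (A : Matrix (Fin n) (Fin n) F) :
    (((Fin n → F) ⧸ LinearMap.range A.mulVecLin) →ₗ[F] LinearMap.ker A.mulVecLin)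
      →ₗ[F] Matrix (Fin n) (Fin n) F where
  toFun h := LinearMap.toMatrix'
    ((LinearMap.ker A.mulVecLin).subtype ∘ₗ h ∘ₗ (LinearMap.range A.mulVecLin).mkQ)
  map_add' h h' := by
    simp only [LinearMap.add_comp, LinearMap.comp_add, map_add]
  map_smul' c h := by
    simp only [LinearMap.smul_comp, LinearMap.comp_smul, _root_.map_smul, RingHom.id_apply]

@[simp] lemma bikMap_apply (A : Matrix (Fin n) (Fin n) F)
    (h : ((Fin n → F) ⧸ LinearMap.range A.mulVecLin) →ₗ[F] LinearMap.ker A.mulVecLin) :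
    bikMap A h = LinearMap.toMatrix'
      ((LinearMap.ker A.mulVecLin).subtype ∘ₗ h ∘ₗ (LinearMap.range A.mulVecLin).mkQ) := rfl

lemma bikMap_injective (A : Matrix (Fin n) (Fin n) F) : Function.Injective (bikMap A) := by
  intro h h' hEq
  have h2 : (LinearMap.ker A.mulVecLin).subtype ∘ₗ h ∘ₗ (LinearMap.range A.mulVecLin).mkQ
      = (LinearMap.ker A.mulVecLin).subtype ∘ₗ h' ∘ₗ (LinearMap.range A.mulVecLin).mkQ :=
    LinearMap.toMatrix'.injective hEq
  refine LinearMap.ext fun q => ?_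
  obtain ⟨x, rfl⟩ := (LinearMap.range A.mulVecLin).mkQ_surjective q
  exact Subtype.ext (by simpa using LinearMap.congr_fun h2 x)

lemma range_bikMap (A : Matrix (Fin n) (Fin n) F) :
    LinearMap.range (bikMap A) = bikernel A := by
  apply le_antisymm
  · rintro _ ⟨h, rfl⟩
    rw [mem_bikernel_iff]
    constructor
    · have h1 : A * (bikMap A) h =
          LinearMap.toMatrix' (A.mulVecLin ∘ₗ ((LinearMap.ker A.mulVecLin).subtype ∘ₗ h ∘ₗ
            (LinearMap.range A.mulVecLin).mkQ)) := by
        rw [LinearMap.toMatrix'_comp]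
        congr 1
        exact (LinearMap.toMatrix'_toLin' A).symm
      have hz : A.mulVecLin ∘ₗ ((LinearMap.ker A.mulVecLin).subtype ∘ₗ h ∘ₗ
          (LinearMap.range A.mulVecLin).mkQ) = 0 := by
        refine LinearMap.ext fun x => ?_
        simpa using (h ((LinearMap.range A.mulVecLin).mkQ x)).2
      rw [h1, hz]
      exact LinearMap.toMatrix'.map_zero
    · have h1 : (bikMap A) h * A =
          LinearMap.toMatrix' (((LinearMap.ker A.mulVecLin).subtype ∘ₗ h ∘ₗ
            (LinearMap.range A.mulVecLin).mkQ) ∘ₗ A.mulVecLin) := by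
        rw [LinearMap.toMatrix'_comp]
        congr 1
        exact (LinearMap.toMatrix'_toLin' A).symm
      have hz : ((LinearMap.ker A.mulVecLin).subtype ∘ₗ h ∘ₗ
          (LinearMap.range A.mulVecLin).mkQ) ∘ₗ A.mulVecLin = 0 := by
        refine LinearMap.ext fun x => ?_
        have h0 : (LinearMap.range A.mulVecLin).mkQ (A.mulVecLin x) = 0 := by
          rw [Submodule.mkQ_apply, Submodule.Quotient.mk_eq_zero]
          exact LinearMap.mem_range_self _ x
        simp only [LinearMap.comp_apply, LinearMap.zero_apply, h0]
        simp
      rw [h1, hz]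
      exact LinearMap.toMatrix'.map_zero
  · intro B hB
    rw [mem_bikernel_iff] at hB
    obtain ⟨h1, h2⟩ := hB
    have hrange : ∀ x, B.mulVecLin x ∈ LinearMap.ker A.mulVecLin := by
      intro x
      rw [LinearMap.mem_ker]
      have h0 : (A * B).mulVecLin = 0 := by rw [h1, Matrix.mulVecLin_zero]
      have := LinearMap.congr_fun ((Matrix.mulVecLin_mul A B).symm.trans h0) x
      simpa using this
    have hkerle : LinearMap.range A.mulVecLin ≤
        LinearMap.ker (B.mulVecLin.codRestrict (LinearMap.ker A.mulVecLin) hrange) := by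
      rintro _ ⟨x, rfl⟩
      rw [LinearMap.mem_ker]
      apply Subtype.ext
      have h0 : (B * A).mulVecLin = 0 := by rw [h2, Matrix.mulVecLin_zero]
      have := LinearMap.congr_fun ((Matrix.mulVecLin_mul B A).symm.trans h0) x
      simpa using this
    refine ⟨(LinearMap.range A.mulVecLin).liftQ
      (B.mulVecLin.codRestrict (LinearMap.ker A.mulVecLin) hrange) hkerle, ?_⟩
    rw [bikMap_apply]
    have h3 : (LinearMap.ker A.mulVecLin).subtype ∘ₗ
        ((LinearMap.range A.mulVecLin).liftQ
          (B.mulVecLin.codRestrict (LinearMap.ker A.mulVecLin) hrange) hkerle) ∘ₗ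
        (LinearMap.range A.mulVecLin).mkQ = B.mulVecLin := by
      refine LinearMap.ext fun x => ?_
      simp
    rw [h3]
    exact LinearMap.toMatrix'_toLin' B

lemma finrank_bikernel (A : Matrix (Fin n) (Fin n) F) (r : ℕ) (hr : A.rank = r) :
    finrank F (bikernel A) = (n - r) * (n - r) := by
  have hfin : finrank F (bikernel A) =
      finrank F (((Fin n → F) ⧸ LinearMap.range A.mulVecLin) →ₗ[F]
        LinearMap.ker A.mulVecLin) := by
    rw [← range_bikMap A]
    exact @LinearMap.finrank_range_of_inj F
      (((Fin n → F) ⧸ LinearMap.range A.mulVecLin) →ₗ[F] LinearMap.ker A.mulVecLin)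
      (Matrix (Fin n) (Fin n) F) _ inferInstance inferInstance inferInstance inferInstance
      (bikMap A) (bikMap_injective A)
  have hpi : finrank F (Fin n → F) = n := by simp
  have hrange : finrank F (LinearMap.range A.mulVecLin) = r := hr
  have hrn : r ≤ n := by rw [← hr]; exact A.rank_le_width
  have hker : finrank F (LinearMap.ker A.mulVecLin) = n - r := by
    have := LinearMap.finrank_range_add_finrank_ker A.mulVecLin
    rw [hpi, hrange] at this
    omega
  have hquot : finrank F ((Fin n → F) ⧸ LinearMap.range A.mulVecLin) = n - r := by
    have := Submodule.finrank_quotient_add_finrank (LinearMap.range A.mulVecLin)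
    rw [hpi, hrange] at this
    omega
  have hlm : finrank F (((Fin n → F) ⧸ LinearMap.range A.mulVecLin) →ₗ[F]
      LinearMap.ker A.mulVecLin) = finrank F ((Fin n → F) ⧸ LinearMap.range A.mulVecLin) *
      finrank F (LinearMap.ker A.mulVecLin) :=
    Module.finrank_linearMap F F ((Fin n → F) ⧸ LinearMap.range A.mulVecLin)
      (LinearMap.ker A.mulVecLin)
  rw [hfin, hlm, hquot, hker]


lemma tc_mapsto {lam : F} (hlam : lam ≠ 0) {A : Matrix (Fin n) (Fin n) F}
    (B : twistedCentralizer A lam) :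
    ∀ x ∈ LinearMap.range A.mulVecLin,
      (B : Matrix (Fin n) (Fin n) F).mulVecLin x ∈ LinearMap.range A.mulVecLin := by
  obtain ⟨B, hB⟩ := B
  rintro _ ⟨y, rfl⟩
  rw [mem_twistedCentralizer_iff] at hB
  have hcomp := congrArg Matrix.mulVecLin hB
  rw [Matrix.mulVecLin_mul] at hcomp
  have h1 := LinearMap.congr_fun hcomp y
  simp only [LinearMap.comp_apply] at h1
  have h2 : B.mulVecLin (A.mulVecLin y) = lam⁻¹ • A.mulVecLin (B.mulVecLin y) := by
    have h3 : (lam • (B * A)).mulVecLin y = lam • (B * A).mulVecLin y := by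
      simp [Matrix.mulVecLin_apply, Matrix.smul_mulVec]
    rw [h1, h3, Matrix.mulVecLin_mul]
    simp [smul_smul, inv_mul_cancel₀ hlam]
  rw [h2]
  exact Submodule.smul_mem _ _ (LinearMap.mem_range_self _ _)

/-- Restriction of a twisted-centralizer element to the range of `A`. -/
noncomputable def tcRestrict (lam : F) (hlam : lam ≠ 0) (A : Matrix (Fin n) (Fin n) F) :
    twistedCentralizer A lam →ₗ[F]
      (LinearMap.range A.mulVecLin →ₗ[F] LinearMap.range A.mulVecLin) where
  toFun B := LinearMap.restrict (B : Matrix (Fin n) (Fin n) F).mulVecLin (tc_mapsto hlam B)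
  map_add' B B' := LinearMap.ext fun x => Subtype.ext <| by
    simp [LinearMap.restrict_apply, Matrix.mulVecLin_apply, Matrix.add_mulVec]
  map_smul' c B := LinearMap.ext fun x => Subtype.ext <| by
    simp [LinearMap.restrict_apply, Matrix.mulVecLin_apply, Matrix.smul_mulVec]

/-- Embedding of `End(range A)` into matrices using a chosen projection `π`. -/
noncomputable def embEnd (A : Matrix (Fin n) (Fin n) F)
    (π : (Fin n → F) →ₗ[F] LinearMap.range A.mulVecLin) :
    (LinearMap.range A.mulVecLin →ₗ[F] LinearMap.range A.mulVecLin)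
      →ₗ[F] Matrix (Fin n) (Fin n) F where
  toFun g := LinearMap.toMatrix' ((LinearMap.range A.mulVecLin).subtype ∘ₗ g ∘ₗ π)
  map_add' g g' := by
    simp only [LinearMap.add_comp, LinearMap.comp_add, map_add]
  map_smul' c g := by
    simp only [LinearMap.smul_comp, LinearMap.comp_smul, _root_.map_smul, RingHom.id_apply]

lemma finrank_tc_upper (lam : F) (hlam : lam ≠ 0) (A : Matrix (Fin n) (Fin n) F) :
    finrank F (twistedCentralizer A lam) ≤ finrank F (bikernel A) +
      finrank F (LinearMap.range A.mulVecLin) * finrank F (LinearMap.range A.mulVecLin) := by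
  classical
  have hle : bikernel A ≤ twistedCentralizer A lam := by
    intro B hB
    rw [mem_bikernel_iff] at hB
    rw [mem_twistedCentralizer_iff, hB.1, hB.2, smul_zero]
  obtain ⟨U, hU⟩ := Submodule.exists_isCompl (LinearMap.range A.mulVecLin)
  set π := (LinearMap.range A.mulVecLin).linearProjOfIsCompl U hU with hπdef
  have hπ : ∀ w : LinearMap.range A.mulVecLin, π (w : Fin n → F) = w := fun w =>
    Submodule.linearProjOfIsCompl_apply_left hU w
  set θ := embEnd A π with hθdef
  have hθinj : Function.Injective θ := by
    intro g g' hEq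
    have h2 : (LinearMap.range A.mulVecLin).subtype ∘ₗ g ∘ₗ π
        = (LinearMap.range A.mulVecLin).subtype ∘ₗ g' ∘ₗ π :=
      LinearMap.toMatrix'.injective hEq
    refine LinearMap.ext fun w => Subtype.ext ?_
    have := LinearMap.congr_fun h2 (w : Fin n → F)
    simpa [hπ w] using this
  set Φ := θ ∘ₗ tcRestrict lam hlam A with hΦdef
  have hkerΦ : LinearMap.ker Φ = (bikernel A).comap (twistedCentralizer A lam).subtype := by
    ext B
    obtain ⟨B, hB⟩ := B
    simp only [LinearMap.mem_ker, Submodule.mem_comap, Submodule.subtype_apply, hΦdef,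
      LinearMap.comp_apply]
    rw [show (0 : Matrix (Fin n) (Fin n) F) = θ 0 by rw [map_zero]]
    rw [hθinj.eq_iff]
    constructor
    · intro h0
      have hBA : B * A = 0 := by
        apply mulVecLin_injOn
        rw [Matrix.mulVecLin_mul, Matrix.mulVecLin_zero]
        refine LinearMap.ext fun x => ?_
        have := congrArg Subtype.val (LinearMap.congr_fun h0
          ⟨A.mulVecLin x, LinearMap.mem_range_self _ x⟩)
        simpa [tcRestrict, LinearMap.restrict_apply] using this
      rw [mem_bikernel_iff]
      refine ⟨?_, hBA⟩
      rw [mem_twistedCentralizer_iff] at hB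
      rw [hB, hBA, smul_zero]
    · intro hbB
      rw [mem_bikernel_iff] at hbB
      refine LinearMap.ext fun x => Subtype.ext ?_
      obtain ⟨x, hx⟩ := x
      obtain ⟨y, rfl⟩ := hx
      have h0 : (B * A).mulVecLin = 0 := by rw [hbB.2, Matrix.mulVecLin_zero]
      rw [Matrix.mulVecLin_mul] at h0
      have := LinearMap.congr_fun h0 y
      simpa [tcRestrict, LinearMap.restrict_apply] using this
  have hrnk := LinearMap.finrank_range_add_finrank_ker Φ
  have hkerfr : finrank F (LinearMap.ker Φ) = finrank F (bikernel A) := by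
    rw [hkerΦ]
    exact LinearEquiv.finrank_eq (Submodule.comapSubtypeEquivOfLe hle)
  have hθrank : finrank F (LinearMap.range θ) =
      finrank F (LinearMap.range A.mulVecLin) * finrank F (LinearMap.range A.mulVecLin) := by
    have h1 := @LinearMap.finrank_range_of_inj F
      (LinearMap.range A.mulVecLin →ₗ[F] LinearMap.range A.mulVecLin)
      (Matrix (Fin n) (Fin n) F) _ inferInstance inferInstance inferInstance inferInstance
      θ hθinj
    rw [h1]
    exact Module.finrank_linearMap F F (LinearMap.range A.mulVecLin)
      (LinearMap.range A.mulVecLin)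
  have hrangele : finrank F (LinearMap.range Φ) ≤
      finrank F (LinearMap.range A.mulVecLin) * finrank F (LinearMap.range A.mulVecLin) := by
    rw [← hθrank]
    exact Submodule.finrank_mono (by rw [hΦdef]; exact LinearMap.range_comp_le_range _ _)
  omega

end Aux

theorem dim_twistedCentralizer_rank_bounds {F : Type*} [Field F] {n : ℕ}
    (lam : F) (hlam : lam ≠ 0) (A : Matrix (Fin n) (Fin n) F) (r : ℕ) (hr : A.rank = r) :
    (n - r) ^ 2 ≤ finrank F (twistedCentralizer A lam) ∧
    finrank F (twistedCentralizer A lam) ≤ (n - r) ^ 2 + r ^ 2 := by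
  classical
  have hbik : finrank F (bikernel A) = (n - r) ^ 2 := by
    rw [finrank_bikernel A r hr, sq]
  have hle : bikernel A ≤ twistedCentralizer A lam := by
    intro B hB
    rw [mem_bikernel_iff] at hB
    rw [mem_twistedCentralizer_iff, hB.1, hB.2, smul_zero]
  constructor
  · rw [← hbik]
    exact Submodule.finrank_mono hle
  · have h := finrank_tc_upper lam hlam A
    have hWr : finrank F (LinearMap.range A.mulVecLin) = r := hr
    rw [hbik, hWr, ← sq] at h
    exact h
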